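/- Let V₀ be a finite-dimensional complex vector space, let V₁, …, V_n ⊆ V₀ be subspaces, and let χ₁, …, χ_n be positive real numbers. Suppose that for every subspace U with 0 ≠ U ⊊ V₀ one has (1/dim U)·Σ_{i=1}^n χ_i·dim(V_i ∩ U) < (1/dim V₀)·Σ_{i=1}^n χ_i·dim V_i. Then the system (V₀; V₁, …, V_n) is indecomposable. -/
import Mathlib


open Module Finset

/-- The system of subspaces `Vq` of `V` is indecomposable: there is no direct sum
decomposition `V = W ⊕ W'` with `W ≠ 0 ≠ W'` such that
`Vq q = (Vq q ∩ W) ⊕ (Vq q ∩ W')` for all `q`. -/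
def IndecomposableSystem {ι : Type*} {V : Type*} [AddCommGroup V] [Module ℂ V]
    (Vq : ι → Submodule ℂ V) : Prop :=
  ¬ ∃ W W' : Submodule ℂ V, W ≠ ⊥ ∧ W' ≠ ⊥ ∧ IsCompl W W' ∧
      ∀ q, Vq q = (Vq q ⊓ W) ⊔ (Vq q ⊓ W')

/-- A system of subspaces satisfying the strict stability inequalities of the
unitarization criterion for all proper nonzero subspaces is indecomposable. -/
theorem indecomposable_of_stability_inequalities
    {V₀ : Type*} [AddCommGroup V₀] [Module ℂ V₀] [FiniteDimensional ℂ V₀]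
    (n : ℕ) (V : Fin n → Submodule ℂ V₀) (χ : Fin n → ℝ) (hχ : ∀ i, 0 < χ i)
    (hstab : ∀ U : Submodule ℂ V₀, U ≠ ⊥ → U ≠ ⊤ →
      (1 / (finrank ℂ U : ℝ)) * ∑ i, χ i * (finrank ℂ ↥(V i ⊓ U) : ℝ) <
      (1 / (finrank ℂ V₀ : ℝ)) * ∑ i, χ i * (finrank ℂ (V i) : ℝ)) :
    IndecomposableSystem V := by
  rintro ⟨W, W', hW, hW', hcompl, hsplit⟩
  -- W and W' are proper
  have hWt : W ≠ ⊤ := by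
    rintro rfl
    exact hW' (disjoint_top.mp hcompl.disjoint.symm)
  have hW't : W' ≠ ⊤ := by
    rintro rfl
    exact hW (disjoint_top.mp hcompl.disjoint)
  -- dimensions
  have ha : 0 < (finrank ℂ W : ℝ) := by
    have : 0 < finrank ℂ W := finrank_pos_iff.mpr (Submodule.nontrivial_iff_ne_bot.mpr hW)
    exact_mod_cast this
  have hb : 0 < (finrank ℂ W' : ℝ) := by
    have : 0 < finrank ℂ W' := finrank_pos_iff.mpr (Submodule.nontrivial_iff_ne_bot.mpr hW')
    exact_mod_cast this
  have hab : (finrank ℂ W : ℝ) + (finrank ℂ W' : ℝ) = (finrank ℂ V₀ : ℝ) := by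
    have h := Submodule.finrank_sup_add_finrank_inf_eq W W'
    rw [hcompl.sup_eq_top, hcompl.inf_eq_bot, finrank_bot, finrank_top] at h
    exact_mod_cast h.symm
  have hd : 0 < (finrank ℂ V₀ : ℝ) := by rw [← hab]; positivity
  -- decomposition of dimensions of V i
  have hdim : ∀ i, (finrank ℂ ↥(V i ⊓ W) : ℝ) + (finrank ℂ ↥(V i ⊓ W') : ℝ)
      = (finrank ℂ (V i) : ℝ) := by
    intro i
    have h1 := Submodule.finrank_sup_add_finrank_inf_eq (V i ⊓ W) (V i ⊓ W')
    have h2 : (V i ⊓ W) ⊓ (V i ⊓ W') = ⊥ :=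
      (hcompl.disjoint.mono inf_le_right inf_le_right).eq_bot
    rw [h2, finrank_bot, ← hsplit i] at h1
    exact_mod_cast h1.symm
  -- sums
  set S := ∑ i, χ i * (finrank ℂ (V i) : ℝ) with hS
  set SW := ∑ i, χ i * (finrank ℂ ↥(V i ⊓ W) : ℝ) with hSW
  set SW' := ∑ i, χ i * (finrank ℂ ↥(V i ⊓ W') : ℝ) with hSW'
  have hsum : SW + SW' = S := by
    rw [hS, hSW, hSW', ← Finset.sum_add_distrib]
    exact Finset.sum_congr rfl fun i _ => by rw [← mul_add, hdim i]
  have h1 := hstab W hW hWt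
  have h2 := hstab W' hW' hW't
  rw [one_div, one_div, inv_mul_eq_div, inv_mul_eq_div, div_lt_div_iff₀ ha hd] at h1
  rw [one_div, one_div, inv_mul_eq_div, inv_mul_eq_div, div_lt_div_iff₀ hb hd] at h2
  have : S * (finrank ℂ V₀ : ℝ) < S * (finrank ℂ V₀ : ℝ) := by
    calc S * (finrank ℂ V₀ : ℝ) = (SW + SW') * (finrank ℂ V₀ : ℝ) := by rw [hsum]
    _ = SW * (finrank ℂ V₀ : ℝ) + SW' * (finrank ℂ V₀ : ℝ) := by ring
    _ < S * (finrank ℂ W : ℝ) + S * (finrank ℂ W' : ℝ) := add_lt_add h1 h2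
    _ = S * (finrank ℂ V₀ : ℝ) := by rw [← mul_add, hab]
  exact lt_irrefl _ this
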